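/- Let μ_x ∈ (0,1) and α_x := 1 - 2μ_x². Define s_0 := μ_x, s_1 := μ_x(1 - μ_x²), and for n ≥ 2, s_n := (P_{n-1}(α_x) - P_{n+1}(α_x)) / ((4n+2) μ_x) where P_n are the Legendre polynomials. Then for all n ≥ 2, s_n = ((2n-1)/(n+1)) (1 - 2μ_x²) s_{n-1} - ((n-2)/(n+1)) s_{n-2}. -/
import Mathlib


/-- Legendre polynomials as functions `ℝ → ℝ`. -/
noncomputable def legendreP : ℕ → ℝ → ℝ
  | 0, _ => 1
  | 1, x => x
  | (n + 2), x =>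
      ((2 * (n : ℝ) + 3) * x * legendreP (n + 1) x - ((n : ℝ) + 1) * legendreP n x)
        / ((n : ℝ) + 2)

lemma legendreP_add_two (n : ℕ) (x : ℝ) :
    legendreP (n + 2) x =
      ((2 * (n : ℝ) + 3) * x * legendreP (n + 1) x - ((n : ℝ) + 1) * legendreP n x)
        / ((n : ℝ) + 2) := by
  rw [legendreP]

/-- The DTBC convolution coefficients `s_n` of the 1D leap-frog scheme satisfy the
three-term recurrence `s_n = ((2n-1)/(n+1)) (1-2μ²) s_{n-1} - ((n-2)/(n+1)) s_{n-2}`. -/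
theorem dtbc_coefficients_recurrence (μ : ℝ) (hμ0 : 0 < μ) (hμ1 : μ < 1)
    (s : ℕ → ℝ)
    (hs0 : s 0 = μ) (hs1 : s 1 = μ * (1 - μ ^ 2))
    (hsn : ∀ n : ℕ, 2 ≤ n →
      s n = (legendreP (n - 1) (1 - 2 * μ ^ 2) - legendreP (n + 1) (1 - 2 * μ ^ 2))
        / ((4 * (n : ℝ) + 2) * μ)) :
    ∀ n : ℕ, 2 ≤ n →
      s n = ((2 * (n : ℝ) - 1) / ((n : ℝ) + 1)) * (1 - 2 * μ ^ 2) * s (n - 1)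
        - (((n : ℝ) - 2) / ((n : ℝ) + 1)) * s (n - 2) := by
  have hμ : μ ≠ 0 := ne_of_gt hμ0
  intro n hn
  obtain ⟨m, rfl⟩ : ∃ m, n = m + 2 := ⟨n - 2, by omega⟩
  match m with
  | 0 =>
    have H2 := hsn 2 (by norm_num)
    norm_num at H2 ⊢
    rw [H2, hs1]
    simp only [legendreP_add_two 1, legendreP_add_two 0, legendreP]
    push_cast
    field_simp
    ring
  | 1 =>
    have H3 := hsn 3 (by norm_num)
    have H2 := hsn 2 (by norm_num)
    norm_num at H3 H2 ⊢
    rw [H3, H2, hs1]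
    simp only [legendreP_add_two 2, legendreP_add_two 1, legendreP_add_two 0, legendreP]
    push_cast
    field_simp
    ring
  | (k + 2) =>
    have H2 := hsn (k + 4) (by omega)
    have H1 := hsn (k + 3) (by omega)
    have H0 := hsn (k + 2) (by omega)
    have e2 : k + 2 + 2 = k + 4 := rfl
    have e1 : k + 2 + 2 - 1 = k + 3 := rfl
    have e0 : k + 2 + 2 - 2 = k + 2 := rfl
    rw [e2, e1, e0, H2, H1, H0]
    have d2 : k + 4 - 1 = k + 3 := rfl
    have d1 : k + 3 - 1 = k + 2 := rfl
    have d0 : k + 2 - 1 = k + 1 := rfl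
    rw [d2, d1, d0]
    have L5 := legendreP_add_two (k + 3) (1 - 2 * μ ^ 2)
    have L4 := legendreP_add_two (k + 2) (1 - 2 * μ ^ 2)
    have L3 := legendreP_add_two (k + 1) (1 - 2 * μ ^ 2)
    have i5 : k + 4 + 1 = k + 3 + 2 := rfl
    have i4 : k + 3 + 1 = k + 2 + 2 := rfl
    have i3 : k + 2 + 1 = k + 1 + 2 := rfl
    rw [i5, i4, i3, L5, L4, L3]
    have h3 : (k : ℝ) + 3 ≠ 0 := by positivity
    have h4 : (k : ℝ) + 4 ≠ 0 := by positivity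
    have h5 : (k : ℝ) + 5 ≠ 0 := by positivity
    push_cast
    field_simp
    ring
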